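/- Let d ≥ 1, let e : Fin (d+1) → Fin d → ℂᵈ give d+1 orthonormal bases of ℂᵈ that are pairwise mutually unbiased (|⟨e_{b,j}, e_{b',j'}⟩|² = 1/d whenever b ≠ b'), and let ρ be a d×d Hermitian positive definite matrix with tr ρ = 1. Define Π_{b,j} := |e_{b,j}⟩⟨e_{b,j}|/(d+1) and p_{b,j} := tr(Π_{b,j} ρ) > 0, and let F be the ℝ-linear map on the real vector space of d×d Hermitian matrices given by F(X) = ∑_{b,j} p_{b,j}⁻¹ tr(Π_{b,j} X) Π_{b,j}. Then F is bijective, and the trace of the ℝ-linear endomorphism F⁻¹ equals d² + d − d·tr(ρ²). Consequently the scaled mean-square error of the best linear unbiased estimator, Tr(F⁻¹) − tr(ρ²), equals (d+1)(d − tr(ρ²)). -/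

import Mathlib

open Matrix ComplexOrder
open scoped BigOperators

private lemma trace_vecMulVec {d : ℕ} (u v : Fin d → ℂ) :
    (vecMulVec u v).trace = u ⬝ᵥ v := by
  simp [Matrix.trace, Matrix.diag, vecMulVec_apply, dotProduct]

private lemma vecMulVec_mul_vecMulVec {d : ℕ} (u v w z : Fin d → ℂ) :
    vecMulVec u v * vecMulVec w z = (v ⬝ᵥ w) • vecMulVec u z := by
  ext i j
  simp only [Matrix.mul_apply, vecMulVec_apply, Matrix.smul_apply, dotProduct,
    Finset.sum_mul, smul_eq_mul, Finset.mul_sum]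
  exact Finset.sum_congr rfl fun k _ => by ring

private lemma trace_smulRight' {V : Type*} [AddCommGroup V] [Module ℂ V]
    [Module.Finite ℂ V] [Module.Free ℂ V] (f : V →ₗ[ℂ] ℂ) (v : V) :
    LinearMap.trace ℂ V (f.smulRight v) = f v := by
  have h : f.smulRight v = dualTensorHom ℂ V V (f ⊗ₜ v) := by ext x; simp
  rw [h, LinearMap.trace_eq_contract_apply, contractLeft_apply]

private lemma onb_resolution {d : ℕ} (e : Fin d → Fin d → ℂ)
    (hortho : ∀ j k, star (e j) ⬝ᵥ e k = if j = k then 1 else 0) :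
    ∑ j, vecMulVec (e j) (star (e j)) = 1 := by
  set V : Matrix (Fin d) (Fin d) ℂ := Matrix.of (fun i j => e j i) with hV
  have h1 : Vᴴ * V = 1 := by
    ext j k
    simp only [Matrix.mul_apply, Matrix.conjTranspose_apply, hV, Matrix.of_apply,
      Matrix.one_apply]
    have := hortho j k
    simpa [dotProduct, Pi.star_apply, RCLike.star_def] using this
  have h2 : V * Vᴴ = 1 := mul_eq_one_comm.mp h1
  ext i i'
  rw [← h2]
  simp [Matrix.mul_apply, Matrix.sum_apply, vecMulVec_apply, hV, Matrix.conjTranspose_apply]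

/-- Scaled MSE of the BLUE for the MUB measurement (paper's Eq. (15)): the
frame superoperator `F` at a full-rank state `ρ` is bijective and the trace of
its inverse equals `d² + d - d·tr(ρ²)`, so that `Tr(F⁻¹) - tr(ρ²) =
(d+1)(d - tr ρ²)`.  Here `F` is taken as the ℂ-linear extension of the
ℝ-linear frame superoperator on Hermitian matrices; since the matrix algebra
is the complexification of the real space of Hermitian matrices, the ℂ-linear
trace of (the extension of) `F⁻¹` coincides with its ℝ-linear trace. -/
theorem stmt_9 (d : ℕ) (hd : 1 ≤ d) (e : Fin (d + 1) → Fin d → Fin d → ℂ)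
    (hortho : ∀ b j k, star (e b j) ⬝ᵥ e b k = if j = k then 1 else 0)
    (hmub : ∀ b b', b ≠ b' → ∀ j j', ‖star (e b j) ⬝ᵥ e b' j'‖ ^ 2 = 1 / d)
    (ρ : Matrix (Fin d) (Fin d) ℂ) (hρ : ρ.PosDef) (hρtr : ρ.trace = 1)
    (P : Fin (d + 1) → Fin d → Matrix (Fin d) (Fin d) ℂ)
    (hPdef : ∀ b j, P b j = ((d : ℂ) + 1)⁻¹ • vecMulVec (e b j) (star (e b j)))
    (p : Fin (d + 1) → Fin d → ℝ)
    (hp : ∀ b j, (p b j : ℂ) = (P b j * ρ).trace) (hppos : ∀ b j, 0 < p b j)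
    (F : Matrix (Fin d) (Fin d) ℂ →ₗ[ℂ] Matrix (Fin d) (Fin d) ℂ)
    (hF : ∀ X, F X = ∑ b, ∑ j, (((p b j : ℂ))⁻¹ * (P b j * X).trace) • P b j) :
    Function.Bijective F ∧
    ∀ G : Matrix (Fin d) (Fin d) ℂ →ₗ[ℂ] Matrix (Fin d) (Fin d) ℂ,
      (∀ X, G (F X) = X) → (∀ X, F (G X) = X) →
      LinearMap.trace ℂ (Matrix (Fin d) (Fin d) ℂ) G =
        (d : ℂ) ^ 2 + d - d * (ρ * ρ).trace ∧
      LinearMap.trace ℂ (Matrix (Fin d) (Fin d) ℂ) G - (ρ * ρ).trace =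
        ((d : ℂ) + 1) * ((d : ℂ) - (ρ * ρ).trace) := by
  -- notation
  set A : Fin (d + 1) → Fin d → Matrix (Fin d) (Fin d) ℂ :=
    fun b j => vecMulVec (e b j) (star (e b j)) with hA
  set c : ℂ := (d : ℂ) + 1 with hcdef
  have hdc : (d : ℂ) ≠ 0 := Nat.cast_ne_zero.mpr (by omega)
  have hc0 : c ≠ 0 := by
    have h' : ((d + 1 : ℕ) : ℂ) ≠ 0 := Nat.cast_ne_zero.mpr d.succ_ne_zero
    push_cast at h'
    simpa [hcdef] using h' 
  set q : Fin (d + 1) → Fin d → ℂ := fun b j => c * (p b j : ℂ) with hq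
  have hq0 : ∀ b j, q b j ≠ 0 := by
    intro b j
    exact mul_ne_zero hc0 (by exact_mod_cast (hppos b j).ne')
  -- trace of A
  have htrA : ∀ b j, (A b j).trace = 1 := by
    intro b j
    rw [hA, trace_vecMulVec]
    have h := hortho b j j
    simp only [if_true, eq_self_iff_true] at h
    rw [← h]
    simp [dotProduct, mul_comm]
  -- Gram matrix
  have hGram : ∀ b j b' j', (A b j * A b' j').trace =
      if b = b' then (if j = j' then 1 else 0) else (d : ℂ)⁻¹ := by
    intro b j b' j'
    simp only [hA]
    rw [vecMulVec_mul_vecMulVec, Matrix.trace_smul, trace_vecMulVec, smul_eq_mul,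
      dotProduct_comm (e b j) (star (e b' j'))]
    rcases eq_or_ne b b' with hbb | hbb
    · subst hbb
      rw [hortho b j j', hortho b j' j, if_pos rfl]
      rcases eq_or_ne j j' with hjj | hjj
      · subst hjj; simp
      · simp [hjj, Ne.symm hjj]
    · rw [if_neg hbb]
      have hconj : star (e b' j') ⬝ᵥ e b j = starRingEnd ℂ (star (e b j) ⬝ᵥ e b' j') := by
        simp [dotProduct, map_sum, mul_comm]
      rw [hconj, Complex.mul_conj]
      have hm := hmub b b' hbb j j'
      rw [Complex.normSq_eq_norm_sq, hm]
      push_cast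
      rw [one_div]
  -- resolution of identity in each basis
  have hres : ∀ b, ∑ j, A b j = 1 := fun b => onb_resolution (e b) (hortho b)
  -- q = tr(Aρ)
  have htrAρ : ∀ b j, (A b j * ρ).trace = q b j := by
    intro b j
    have h := hp b j
    rw [hPdef b j, Matrix.smul_mul, Matrix.trace_smul] at h
    simp only [hA, hq]
    rw [h, smul_eq_mul, ← mul_assoc, mul_inv_cancel₀ hc0, one_mul]
  -- sum of q over a basis
  have hsumq : ∀ b, ∑ j, q b j = 1 := by
    intro b
    have : ∑ j, (A b j * ρ).trace = ρ.trace := by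
      rw [← Matrix.trace_sum, ← Finset.sum_mul, hres, Matrix.one_mul]
    simp only [htrAρ] at this
    rw [this, hρtr]
  -- F in terms of A
  have hFA : ∀ X, F X = ∑ b, ∑ j,
      ((q b j)⁻¹ * (c⁻¹ * (A b j * X).trace)) • A b j := by
    intro X
    rw [hF X]
    refine Finset.sum_congr rfl fun b _ => Finset.sum_congr rfl fun j _ => ?_
    rw [hPdef b j]
    simp only [hA, hq, Matrix.smul_mul, Matrix.trace_smul, smul_smul, smul_eq_mul]
    congr 1
    rw [mul_inv]
    ring
  -- rank-one superoperator machinery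
  set ℓ : Matrix (Fin d) (Fin d) ℂ → (Matrix (Fin d) (Fin d) ℂ →ₗ[ℂ] ℂ) :=
    fun B => (Matrix.traceLinearMap (Fin d) ℂ ℂ).comp (LinearMap.mulLeft ℂ B) with hℓ
  have hℓapp : ∀ B X, ℓ B X = (B * X).trace := fun B X => rfl
  set T : Matrix (Fin d) (Fin d) ℂ →ₗ[ℂ] Matrix (Fin d) (Fin d) ℂ :=
    ∑ b, ∑ j, (ℓ (A b j)).smulRight (A b j) with hT
  have hTapp : ∀ X, T X = ∑ b, ∑ j, (A b j * X).trace • A b j := by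
    intro X
    simp [hT, LinearMap.sum_apply, LinearMap.smulRight_apply, hℓapp]
  set R0 : Matrix (Fin d) (Fin d) ℂ →ₗ[ℂ] Matrix (Fin d) (Fin d) ℂ :=
    T - (ℓ 1).smulRight 1 with hR0
  have hR0app : ∀ X, R0 X = T X - X.trace • 1 := by
    intro X
    simp [hR0, LinearMap.sub_apply, LinearMap.smulRight_apply, hℓapp, Matrix.one_mul]
  have hTA : ∀ b' j', T (A b' j') = A b' j' + 1 := by
    intro b' j'
    rw [hTapp]
    have key : ∀ b, ∑ j, (A b j * A b' j').trace • A b j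
        = if b = b' then A b' j' else (d : ℂ)⁻¹ • (1 : Matrix (Fin d) (Fin d) ℂ) := by
      intro b
      rcases eq_or_ne b b' with h | h
      · subst h
        rw [if_pos rfl]
        have : ∀ j, (A b j * A b j').trace • A b j
            = if j = j' then A b j else 0 := by
          intro j
          rw [hGram, if_pos rfl]
          rcases eq_or_ne j j' with h2 | h2
          · subst h2; simp
          · simp [h2]
        rw [Finset.sum_congr rfl fun j _ => this j, Finset.sum_ite_eq' Finset.univ j']
        simp
      · rw [if_neg h]
        have : ∀ j, (A b j * A b' j').trace • A b j = (d : ℂ)⁻¹ • A b j := by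
          intro j; rw [hGram, if_neg h]
        rw [Finset.sum_congr rfl fun j _ => this j, ← Finset.smul_sum, hres]
    rw [Finset.sum_congr rfl fun b _ => key b]
    have hsplit : ∀ b : Fin (d+1),
        (if b = b' then A b' j' else (d:ℂ)⁻¹ • (1 : Matrix (Fin d) (Fin d) ℂ)) =
        (if b = b' then A b' j' - (d:ℂ)⁻¹ • 1 else 0) + (d:ℂ)⁻¹ • 1 := by
      intro b; split_ifs <;> simp
    rw [Finset.sum_congr rfl fun b _ => hsplit b, Finset.sum_add_distrib,
      Finset.sum_ite_eq' Finset.univ b' (fun _ => A b' j' - (d:ℂ)⁻¹ • 1),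
      if_pos (Finset.mem_univ b'), Finset.sum_const, Finset.card_univ, Fintype.card_fin,
      ← Nat.cast_smul_eq_nsmul ℂ, smul_smul]
    have hcc : ((d + 1 : ℕ) : ℂ) * (d:ℂ)⁻¹ = 1 + (d:ℂ)⁻¹ := by
      push_cast; field_simp
    rw [hcc, add_smul, one_smul]
    abel
  have hRA : ∀ b j, R0 (A b j) = A b j := by
    intro b j
    rw [hR0app, hTA, htrA, one_smul, add_sub_cancel_right]
  set W : Submodule ℂ (Matrix (Fin d) (Fin d) ℂ) :=
    Submodule.span ℂ (Set.range fun bj : Fin (d + 1) × Fin d => A bj.1 bj.2) with hWdef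
  have hAW : ∀ b j, A b j ∈ W := fun b j => Submodule.subset_span ⟨(b, j), rfl⟩
  have h1W : (1 : Matrix (Fin d) (Fin d) ℂ) ∈ W := by
    rw [← hres 0]; exact Submodule.sum_mem _ fun j _ => hAW 0 j
  have hRmem : ∀ X, R0 X ∈ W := by
    intro X
    rw [hR0app, hTapp]
    exact Submodule.sub_mem _
      (Submodule.sum_mem _ fun b _ => Submodule.sum_mem _ fun j _ =>
        Submodule.smul_mem _ _ (hAW b j))
      (Submodule.smul_mem _ _ h1W)
  have hRW : ∀ x ∈ W, R0 x = x := by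
    intro x hx
    induction hx using Submodule.span_induction with
    | mem x hx => obtain ⟨⟨b, j⟩, rfl⟩ := hx; exact hRA b j
    | zero => exact map_zero R0
    | add x y _ _ ihx ihy => rw [map_add, ihx, ihy]
    | smul a x _ ih => rw [LinearMap.map_smul, ih]
  have hproj : LinearMap.IsProj W R0 := ⟨hRmem, hRW⟩
  have htrT : LinearMap.trace ℂ (Matrix (Fin d) (Fin d) ℂ) T = ((d + 1) * d : ℕ) := by
    rw [hT, map_sum]
    have : ∀ b, LinearMap.trace ℂ (Matrix (Fin d) (Fin d) ℂ)
        (∑ j, (ℓ (A b j)).smulRight (A b j)) = (d : ℂ) := by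
      intro b
      rw [map_sum]
      have : ∀ j : Fin d, LinearMap.trace ℂ (Matrix (Fin d) (Fin d) ℂ)
          ((ℓ (A b j)).smulRight (A b j)) = 1 := by
        intro j
        rw [trace_smulRight', hℓapp, hGram, if_pos rfl, if_pos rfl]
      rw [Finset.sum_congr rfl fun j _ => this j, Finset.sum_const, Finset.card_univ,
        Fintype.card_fin, nsmul_eq_mul, mul_one]
    rw [Finset.sum_congr rfl fun b _ => this b, Finset.sum_const, Finset.card_univ,
      Fintype.card_fin, nsmul_eq_mul]
    push_cast
    ring
  have htrR0 : LinearMap.trace ℂ (Matrix (Fin d) (Fin d) ℂ) R0 = ((d * d : ℕ) : ℂ) := by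
    rw [hR0, map_sub, htrT, trace_smulRight', hℓapp, Matrix.one_mul, Matrix.trace_one]
    simp only [Fintype.card_fin]
    push_cast
    ring
  have hWtop : W = ⊤ := by
    apply Submodule.eq_top_of_finrank_eq
    have h1 : Module.finrank ℂ (Matrix (Fin d) (Fin d) ℂ) = d * d := by
      rw [Module.finrank_matrix]
      simp [Fintype.card_fin]
    have h2 : (Module.finrank ℂ W : ℂ) = ((d * d : ℕ) : ℂ) := by
      rw [← hproj.trace, htrR0]
    have h3 : Module.finrank ℂ W = d * d := by exact_mod_cast h2
    rw [h1, h3]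
  have hdesign : ∀ X, T X = X + X.trace • 1 := by
    intro X
    have h := hRW X (hWtop ▸ Submodule.mem_top)
    rw [hR0app] at h
    rw [sub_eq_iff_eq_add] at h
    exact h
  -- F ρ = 1
  have hFρ : F ρ = 1 := by
    rw [hFA]
    have hterm : ∀ b j, ((q b j)⁻¹ * (c⁻¹ * (A b j * ρ).trace)) • A b j
        = c⁻¹ • A b j := by
      intro b j
      rw [htrAρ, mul_comm c⁻¹ (q b j), ← mul_assoc, inv_mul_cancel₀ (hq0 b j), one_mul]
    rw [Finset.sum_congr rfl fun b _ => Finset.sum_congr rfl fun j _ => hterm b j]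
    simp only [← Finset.smul_sum, hres]
    rw [Finset.sum_const, Finset.card_univ, Fintype.card_fin,
      ← Nat.cast_smul_eq_nsmul ℂ, smul_smul]
    have h15 : c⁻¹ * ((d + 1 : ℕ) : ℂ) = 1 := by
      rw [hcdef]; push_cast; rw [inv_mul_cancel₀ hc0]
    rw [h15, one_smul]
  -- explicit preimages
  set Y : Fin (d + 1) → Fin d → Matrix (Fin d) (Fin d) ℂ :=
    fun b j => ∑ k, (q b k * ((if k = j then (1 : ℂ) else 0) - q b j)) • A b k with hY
  set Xm : Fin (d + 1) → Fin d → Matrix (Fin d) (Fin d) ℂ :=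
    fun b j => c • Y b j + q b j • ρ with hXm
  have hsumcoeff : ∀ b j, ∑ k, q b k * ((if k = j then (1 : ℂ) else 0) - q b j) = 0 := by
    intro b j
    have h1 : ∑ k, q b k * ((if k = j then (1 : ℂ) else 0) - q b j)
        = (∑ k, (if k = j then q b k else 0)) - (∑ k, q b k) * q b j := by
      rw [Finset.sum_mul, ← Finset.sum_sub_distrib]
      refine Finset.sum_congr rfl fun k _ => ?_
      split_ifs <;> ring
    rw [h1, Finset.sum_ite_eq' Finset.univ j, if_pos (Finset.mem_univ j), hsumq b,
      one_mul, sub_self]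
  have htrY : ∀ b j b' j', (A b' j' * Y b j).trace =
      if b' = b then q b j' * ((if j' = j then (1 : ℂ) else 0) - q b j) else 0 := by
    intro b j b' j'
    rw [hY]
    simp only [Finset.mul_sum, Matrix.mul_smul, Matrix.trace_sum, Matrix.trace_smul,
      smul_eq_mul]
    rcases eq_or_ne b' b with h | h
    · subst h
      rw [if_pos rfl]
      have hk : ∀ k : Fin d, q b' k * ((if k = j then (1:ℂ) else 0) - q b' j) * (A b' j' * A b' k).trace
          = if k = j' then q b' k * ((if k = j then (1:ℂ) else 0) - q b' j) else 0 := by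
        intro k
        rw [hGram, if_pos rfl]
        rcases eq_or_ne k j' with h2 | h2
        · rw [if_pos h2, if_pos h2.symm, mul_one]
        · rw [if_neg h2, if_neg (Ne.symm h2), mul_zero]
      rw [Finset.sum_congr rfl fun k _ => hk k, Finset.sum_ite_eq' Finset.univ j',
        if_pos (Finset.mem_univ j')]
    · rw [if_neg h]
      have hk : ∀ k : Fin d, q b k * ((if k = j then (1:ℂ) else 0) - q b j) * (A b' j' * A b k).trace
          = q b k * ((if k = j then (1:ℂ) else 0) - q b j) * (d : ℂ)⁻¹ := by
        intro k
        rw [hGram, if_neg h]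
      rw [Finset.sum_congr rfl fun k _ => hk k, ← Finset.sum_mul, hsumcoeff, zero_mul]
  have hFY : ∀ b j, F (Y b j) = c⁻¹ • (A b j - q b j • 1) := by
    intro b j
    rw [hFA]
    have hterm : ∀ b' j', ((q b' j')⁻¹ * (c⁻¹ * (A b' j' * Y b j).trace)) • A b' j'
        = if b' = b then (c⁻¹ * ((if j' = j then (1:ℂ) else 0) - q b j)) • A b' j'
          else 0 := by
      intro b' j'
      rw [htrY]
      rcases eq_or_ne b' b with h | h
      · subst h
        rw [if_pos rfl, if_pos rfl]
        congr 1
        have hne := hq0 b' j'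
        field_simp
      · rw [if_neg h, if_neg h, mul_zero, mul_zero, zero_smul]
    rw [Finset.sum_congr rfl fun b' _ => Finset.sum_congr rfl fun j' _ => hterm b' j']
    have houter : ∀ b', (∑ j', if b' = b then
          (c⁻¹ * ((if j' = j then (1:ℂ) else 0) - q b j)) • A b' j' else 0)
        = if b' = b then
          (∑ j', (c⁻¹ * ((if j' = j then (1:ℂ) else 0) - q b j)) • A b j') else 0 := by
      intro b'
      rcases eq_or_ne b' b with h | h
      · subst h; simp
      · simp [h]
    rw [Finset.sum_congr rfl fun b' _ => houter b', Finset.sum_ite_eq' Finset.univ b,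
      if_pos (Finset.mem_univ b)]
    have hsplit : ∀ j', (c⁻¹ * ((if j' = j then (1:ℂ) else 0) - q b j)) • A b j'
        = c⁻¹ • ((if j' = j then A b j' else 0) - q b j • A b j') := by
      intro j'
      split_ifs with h
      · rw [mul_sub, mul_one, sub_smul, smul_sub, smul_smul]
      · rw [zero_sub, zero_sub, mul_neg, neg_smul, smul_neg, smul_smul]
    rw [Finset.sum_congr rfl fun j' _ => hsplit j', ← Finset.smul_sum]
    congr 1
    rw [Finset.sum_sub_distrib, Finset.sum_ite_eq' Finset.univ j, if_pos (Finset.mem_univ j),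
      ← Finset.smul_sum, hres]
  have hFXm : ∀ b j, F (Xm b j) = A b j := by
    intro b j
    simp only [hXm]
    rw [map_add, LinearMap.map_smul, LinearMap.map_smul, hFY, hFρ, smul_smul,
      mul_inv_cancel₀ hc0, one_smul, sub_add_cancel]
  -- bijectivity
  have hsurj : Function.Surjective F := by
    rw [← LinearMap.range_eq_top, ← top_le_iff, ← hWtop, hWdef, Submodule.span_le]
    rintro x ⟨⟨b, j⟩, rfl⟩
    exact ⟨Xm b j, hFXm b j⟩
  have hbij : Function.Bijective F :=
    ⟨LinearMap.injective_iff_surjective.mpr hsurj, hsurj⟩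
  refine ⟨hbij, fun G hGF hFG => ?_⟩
  have hG1 : G 1 = ρ := by rw [← hFρ, hGF]
  have hGA : ∀ b j, G (A b j) = Xm b j := fun b j => by rw [← hFXm b j, hGF]
  -- identity decomposition
  have htrsum : ∀ X : Matrix (Fin d) (Fin d) ℂ,
      ∑ b, ∑ j, (A b j * X).trace = c * X.trace := by
    intro X
    have h1 : ∀ b, ∑ j, (A b j * X).trace = X.trace := by
      intro b
      rw [← Matrix.trace_sum, ← Finset.sum_mul, hres, Matrix.one_mul]
    rw [Finset.sum_congr rfl fun b _ => h1 b, Finset.sum_const, Finset.card_univ,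
      Fintype.card_fin, ← Nat.cast_smul_eq_nsmul ℂ, smul_eq_mul]
    congr 1
    rw [hcdef]
    push_cast
    ring
  have hid : (LinearMap.id : Matrix (Fin d) (Fin d) ℂ →ₗ[ℂ] Matrix (Fin d) (Fin d) ℂ)
      = ∑ b, ∑ j, (ℓ (A b j)).smulRight (A b j - c⁻¹ • 1) := by
    apply LinearMap.ext
    intro X
    simp only [LinearMap.sum_apply, LinearMap.smulRight_apply, LinearMap.id_apply, hℓapp]
    have h1 : ∀ (b : Fin (d+1)) (j : Fin d), (A b j * X).trace • (A b j - c⁻¹ • 1)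
        = (A b j * X).trace • A b j
          - (c⁻¹ * (A b j * X).trace) • (1 : Matrix (Fin d) (Fin d) ℂ) := by
      intro b j
      rw [smul_sub, smul_smul, mul_comm]
    rw [Finset.sum_congr rfl fun b _ => Finset.sum_congr rfl fun j _ => h1 b j]
    simp only [Finset.sum_sub_distrib]
    rw [← hTapp, hdesign]
    simp only [← Finset.sum_smul]
    have h2 : ∑ b, ∑ j, c⁻¹ * (A b j * X).trace = X.trace := by
      simp only [← Finset.mul_sum]
      rw [htrsum, ← mul_assoc, inv_mul_cancel₀ hc0, one_mul]
    rw [h2]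
    abel
  have htrG : LinearMap.trace ℂ (Matrix (Fin d) (Fin d) ℂ) G
      = ∑ b, ∑ j, (A b j * G (A b j - c⁻¹ • 1)).trace := by
    have hcomp : G = ∑ b, ∑ j, (ℓ (A b j)).smulRight (G (A b j - c⁻¹ • 1)) := by
      apply LinearMap.ext
      intro X
      have h0 : G X = G ((∑ b, ∑ j, (ℓ (A b j)).smulRight (A b j - c⁻¹ • 1)) X) := by
        rw [← hid]
        rfl
      rw [h0]
      simp only [LinearMap.sum_apply, LinearMap.smulRight_apply, map_sum,
        LinearMap.map_smul]
    conv_lhs => rw [hcomp]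
    rw [map_sum]
    simp only [map_sum, trace_smulRight', hℓapp]
  have hGval : ∀ b j, G (A b j - c⁻¹ • 1) = Xm b j - c⁻¹ • ρ := by
    intro b j
    rw [map_sub, LinearMap.map_smul, hGA, hG1]
  have htrterm : ∀ b j, (A b j * G (A b j - c⁻¹ • 1)).trace
      = c * (q b j * (1 - q b j)) + q b j * q b j - c⁻¹ * q b j := by
    intro b j
    rw [hGval]
    simp only [hXm]
    rw [Matrix.mul_sub, Matrix.mul_add, Matrix.mul_smul, Matrix.mul_smul, Matrix.mul_smul,
      Matrix.trace_sub, Matrix.trace_add, Matrix.trace_smul, Matrix.trace_smul,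
      Matrix.trace_smul, htrAρ, htrY, if_pos rfl, if_pos rfl]
    simp only [smul_eq_mul]
  have hSb : ∀ b, ∑ j, (c * (q b j * (1 - q b j)) + q b j * q b j - c⁻¹ * q b j)
      = c - (c - 1) * (∑ j, q b j * q b j) - c⁻¹ := by
    intro b
    have hterm : ∀ j, c * (q b j * (1 - q b j)) + q b j * q b j - c⁻¹ * q b j
        = c * q b j - (c - 1) * (q b j * q b j) - c⁻¹ * q b j := by
      intro j; ring
    rw [Finset.sum_congr rfl fun j _ => hterm j]
    simp only [Finset.sum_sub_distrib, ← Finset.mul_sum]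
    rw [hsumq b, mul_one, mul_one]
  have hSigma : ∑ b, ∑ j, q b j * q b j = (ρ * ρ).trace + 1 := by
    have h1 : ∑ b, ∑ j, q b j • A b j = ρ + ρ.trace • 1 := by
      have h2 := hTapp ρ
      rw [hdesign ρ] at h2
      rw [h2]
      exact Finset.sum_congr rfl fun b _ => Finset.sum_congr rfl fun j _ => by
        rw [htrAρ]
    have h3 := congrArg (fun M : Matrix (Fin d) (Fin d) ℂ => (M * ρ).trace) h1
    rw [Matrix.add_mul, Matrix.smul_mul, Matrix.one_mul, Matrix.trace_add,
      Matrix.trace_smul, hρtr, smul_eq_mul, mul_one] at h3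
    rw [← h3]
    rw [Finset.sum_mul, Matrix.trace_sum]
    refine Finset.sum_congr rfl fun b _ => ?_
    rw [Finset.sum_mul, Matrix.trace_sum]
    refine Finset.sum_congr rfl fun j _ => ?_
    rw [Matrix.smul_mul, Matrix.trace_smul, htrAρ, smul_eq_mul]
  have hmain : LinearMap.trace ℂ (Matrix (Fin d) (Fin d) ℂ) G
      = (d : ℂ) ^ 2 + d - d * (ρ * ρ).trace := by
    rw [htrG, Finset.sum_congr rfl fun b _ => Finset.sum_congr rfl fun j _ => htrterm b j,
      Finset.sum_congr rfl fun b _ => hSb b]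
    simp only [Finset.sum_sub_distrib, ← Finset.mul_sum, hSigma]
    rw [Finset.sum_const, Finset.card_univ, Fintype.card_fin,
      ← Nat.cast_smul_eq_nsmul ℂ, smul_eq_mul]
    rw [Finset.sum_const, Finset.card_univ, Fintype.card_fin,
      ← Nat.cast_smul_eq_nsmul ℂ, smul_eq_mul]
    rw [hcdef]
    push_cast
    have : (d : ℂ) ≠ 0 := hdc
    field_simp
    ring
  exact ⟨hmain, by rw [hmain]; ring⟩
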